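/- Generalized pressure distribution principle: Let Z ⊆ X be a Borel set. Suppose there exist ε > 0, s ≥ 0, a sequence of Borel probability measures μ_k on X, a constant K > 0 and an integer N such that limsup_{k→∞} μ_k(B_n(x,ε)) ≤ K·exp(−ns + Σ_{i=0}^{n−1} φ(T^i x)) for every Bowen ball B_n(x,ε) with B_n(x,ε) ∩ Z ≠ ∅ and n ≥ N. If some weak* limit measure ν of the sequence (μ_k) satisfies ν(Z) > 0, then P(Z, φ, ε) ≥ s. -/

import Mathlib

open Filter Set Metric Topology MeasureTheory
open scoped ENNReal NNReal

noncomputable section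

/-- Birkhoff sum `S_n φ(x)`. -/
def birkhoff {X : Type*} (T : X → X) (φ : X → ℝ) (n : ℕ) (x : X) : ℝ :=
  ∑ i ∈ Finset.range n, φ (T^[i] x)

/-- Bowen ball `B_n(x, ε)`. -/
def bowenBall {X : Type*} [PseudoMetricSpace X] (T : X → X) (n : ℕ) (x : X) (ε : ℝ) : Set X :=
  {y | ∀ i < n, dist (T^[i] x) (T^[i] y) < ε}

/-- The quantity `M(Z, t, φ, n, ε)` of Pesin–Pitskel: infimum over countable covers of `Z`
by Bowen balls `B_m(x,ε)` with `m ≥ n` of `Σ exp(-t m + sup_{B_m(x,ε)} S_m φ)`. -/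
def ppM {X : Type*} [PseudoMetricSpace X] (T : X → X) (φ : X → ℝ) (Z : Set X)
    (t : ℝ) (n : ℕ) (ε : ℝ) : ℝ≥0∞ :=
  ⨅ (c : ℕ → ℕ × X) (_ : ∀ i, n ≤ (c i).1)
    (_ : Z ⊆ ⋃ i, bowenBall T (c i).1 (c i).2 ε),
    ∑' i, ENNReal.ofReal (Real.exp (-t * (c i).1 +
      sSup ((birkhoff T φ (c i).1) '' bowenBall T (c i).1 (c i).2 ε)))

/-- `M(Z,t,φ,ε) = lim_{n→∞} M(Z,t,φ,n,ε)` (a monotone limit, hence a supremum). -/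
def ppMlim {X : Type*} [PseudoMetricSpace X] (T : X → X) (φ : X → ℝ) (Z : Set X)
    (t : ℝ) (ε : ℝ) : ℝ≥0∞ :=
  ⨆ n : ℕ, ppM T φ Z t n ε

/-- Pesin–Pitskel pressure at scale `ε`: `P(Z,φ,ε) = inf {t : M(Z,t,φ,ε) = 0}`. -/
def ppPressureAt {X : Type*} [PseudoMetricSpace X] (T : X → X) (φ : X → ℝ) (Z : Set X)
    (ε : ℝ) : ℝ :=
  sInf {t : ℝ | ppMlim T φ Z t ε = 0}

/-- Pesin–Pitskel topological pressure `P(Z,φ) = lim_{ε→0} P(Z,φ,ε)`. -/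
def ppPressure {X : Type*} [PseudoMetricSpace X] (T : X → X) (φ : X → ℝ) (Z : Set X) : ℝ :=
  limsup (fun ε => ppPressureAt T φ Z ε) (𝓝[>] (0 : ℝ))

/-- `E` is an `(n,ε)`-separated set for `T`. -/
def IsSep {X : Type*} [PseudoMetricSpace X] (T : X → X) (n : ℕ) (ε : ℝ) (E : Set X) : Prop :=
  ∀ x ∈ E, ∀ y ∈ E, x ≠ y → ∃ i < n, ε < dist (T^[i] x) (T^[i] y)

/-- `P(φ, n, ε)`: supremum of `Σ_{x∈E} e^{S_n φ(x)}` over `(n,ε)`-separated sets `E`. -/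
def sepSum {X : Type*} [PseudoMetricSpace X] (T : X → X) (φ : X → ℝ) (n : ℕ) (ε : ℝ) : ℝ :=
  sSup {r : ℝ | ∃ E : Finset X, IsSep T n ε ↑E ∧ r = ∑ x ∈ E, Real.exp (birkhoff T φ n x)}

/-- Classical topological pressure via separated sets. -/
def Ptop {X : Type*} [PseudoMetricSpace X] (T : X → X) (φ : X → ℝ) : ℝ :=
  limsup (fun ε => limsup (fun n : ℕ => Real.log (sepSum T φ n ε) / n) atTop) (𝓝[>] (0 : ℝ))

/-- The specification property. -/
def Specification {X : Type*} [PseudoMetricSpace X] (T : X → X) : Prop :=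
  ∀ ε : ℝ, 0 < ε → ∃ m : ℕ, ∀ (k : ℕ) (a b : Fin k → ℕ) (xs : Fin k → X),
    (∀ j, a j ≤ b j) →
    (∀ (j : ℕ) (h : j + 1 < k), b ⟨j, Nat.lt_of_succ_lt h⟩ + m ≤ a ⟨j + 1, h⟩) →
    ∃ x : X, ∀ j : Fin k, ∀ p ≤ b j - a j, dist (T^[p + a j] x) (T^[p] (xs j)) < ε

/-- The non-dense orbit set `E(z₀)`. -/
def Eset {X : Type*} [TopologicalSpace X] (T : X → X) (z₀ : X) : Set X :=
  {x | z₀ ∉ closure (Set.range fun n : ℕ => T^[n] x)}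

end

section helpers
variable {X : Type*} [MetricSpace X]

omit [MetricSpace X] in
lemma birkhoff_le {T : X → X} {φ : X → ℝ} {M : ℝ} (hM : ∀ y, φ y ≤ M) (n : ℕ) (y : X) :
    birkhoff T φ n y ≤ n * M := by
  calc birkhoff T φ n y ≤ ∑ _i ∈ Finset.range n, M := Finset.sum_le_sum fun i _ => hM _
  _ = n * M := by simp

lemma sSup_birkhoff_le {T : X → X} {φ : X → ℝ} {M : ℝ} (hM : ∀ y, φ y ≤ M) (hM0 : 0 ≤ M)
    (n : ℕ) (x : X) (ε : ℝ) :
    sSup (birkhoff T φ n '' bowenBall T n x ε) ≤ n * M :=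
  Real.sSup_le (fun r hr => by
    obtain ⟨y, -, rfl⟩ := hr; exact birkhoff_le hM n y) (by positivity)

lemma ppMlim_zero_exists [CompactSpace X] [Nonempty X]
    (T : X → X) (φ : X → ℝ) (hφ : Continuous φ) (Z : Set X)
    {ε : ℝ} (hε : 0 < ε) : ∃ t : ℝ, ppMlim T φ Z t ε = 0 := by
  classical
  -- bound on φ
  obtain ⟨x₀, -, hx₀⟩ := isCompact_univ.exists_isMaxOn univ_nonempty hφ.continuousOn
  set M : ℝ := max (φ x₀) 0 with hMdef
  have hM : ∀ y, φ y ≤ M := fun y => le_max_of_le_left (hx₀ (mem_univ y))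
  have hM0 : (0:ℝ) ≤ M := le_max_right _ _
  -- finite ε/2 net
  obtain ⟨F, hF⟩ := isCompact_univ.elim_finite_subcover (fun x : X => ball x (ε/2))
    (fun x => isOpen_ball) (fun y _ => mem_iUnion.mpr ⟨y, mem_ball_self (by linarith)⟩)
  have hnet : ∀ y : X, ∃ f, f ∈ F ∧ dist y f < ε / 2 := by
    intro y
    have := hF (mem_univ y)
    simp only [mem_iUnion, mem_ball] at this
    obtain ⟨f, hf1, hf2⟩ := this
    exact ⟨f, hf1, hf2⟩
  choose near hnearF hnear using hnet
  set A : ℝ := (F.card : ℝ) with hAdef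
  have hA1 : (1:ℝ) ≤ A := by
    have h1 : 0 < F.card := Finset.card_pos.mpr ⟨_, hnearF (Classical.arbitrary X)⟩
    rw [hAdef]
    exact_mod_cast h1
  have hA0 : (0:ℝ) < A := lt_of_lt_of_le one_pos hA1
  set t : ℝ := M + Real.log A + 1 with htdef
  set q : ℝ := Real.exp (M - t) with hqdef
  have hq0 : 0 ≤ q := (Real.exp_pos _).le
  set r : ℝ := Real.exp (-1) with hrdef
  have hr0 : 0 ≤ r := (Real.exp_pos _).le
  have hr1 : r < 1 := by
    rw [hrdef]
    calc Real.exp (-1) < Real.exp 0 := Real.exp_lt_exp.mpr (by norm_num)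
    _ = 1 := Real.exp_zero
  have hAq : A * q = r := by
    rw [hqdef, htdef, hrdef]
    have : M - (M + Real.log A + 1) = -Real.log A + -1 := by ring
    rw [this, Real.exp_add, Real.exp_neg, Real.exp_log hA0]
    field_simp
  have hqr : q ≤ r := by
    rw [hqdef, hrdef, htdef]
    apply Real.exp_le_exp.mpr
    have := Real.log_nonneg hA1
    linarith
  have hq1 : q ≤ 1 := hqr.trans hr1.le
  -- uniform bound on a single term
  have hterm_le : ∀ (k : ℕ) (x : X),
      ENNReal.ofReal (Real.exp (-t * k + sSup ((birkhoff T φ k) '' bowenBall T k x ε)))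
        ≤ ENNReal.ofReal (q ^ k) := by
    intro k x
    apply ENNReal.ofReal_le_ofReal
    have h1 : sSup ((birkhoff T φ k) '' bowenBall T k x ε) ≤ k * M :=
      sSup_birkhoff_le hM hM0 _ _ _
    have h2 : -t * (k : ℝ) + sSup ((birkhoff T φ k) '' bowenBall T k x ε)
        ≤ (k : ℝ) * (M - t) := by nlinarith [h1]
    calc Real.exp (-t * k + sSup ((birkhoff T φ k) '' bowenBall T k x ε))
        ≤ Real.exp ((k : ℝ) * (M - t)) := Real.exp_le_exp.mpr h2
      _ = q ^ k := by rw [hqdef, ← Real.exp_nat_mul]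
  set C : ℝ≥0∞ := 1 + (1 - ENNReal.ofReal r)⁻¹ with hCdef
  have hrlt1 : ENNReal.ofReal r < 1 := ENNReal.ofReal_lt_one.mpr hr1
  have hC : C ≠ ∞ := by
    rw [hCdef]
    refine ENNReal.add_ne_top.mpr ⟨ENNReal.one_ne_top, ENNReal.inv_ne_top.mpr ?_⟩
    exact (tsub_pos_of_lt hrlt1).ne'
  have key : ∀ m : ℕ, ∃ c : ℕ → ℕ × X, (∀ i, m ≤ (c i).1) ∧
      (univ ⊆ ⋃ i, bowenBall T (c i).1 (c i).2 ε) ∧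
      (∑' i, ENNReal.ofReal (Real.exp (-t * (c i).1 +
        sSup ((birkhoff T φ (c i).1) '' bowenBall T (c i).1 (c i).2 ε))))
        ≤ ENNReal.ofReal (r ^ m) * C := by
    intro m
    set κ : X → (Fin m → X) := fun y i => near (T^[i] y) with hκdef
    set rep : (Fin m → X) → X := fun w =>
      if h : ∃ y, κ y = w then h.choose else Classical.arbitrary X with hrepdef
    set L : List X := (Fintype.piFinset (fun _ : Fin m => F)).toList.map rep with hLdef
    have hLlen : L.length = F.card ^ m := by
      rw [hLdef, List.length_map, Finset.length_toList, Fintype.card_piFinset_const]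
    set c : ℕ → ℕ × X := fun i =>
      if h : i < L.length then (m, L.get ⟨i, h⟩) else (m + 1 + i, Classical.arbitrary X)
      with hcdef
    have hc1 : ∀ i, m ≤ (c i).1 := by
      intro i
      rw [hcdef]
      by_cases h : i < L.length
      · simp [h]
      · simp [h]
        omega
    refine ⟨c, hc1, ?_, ?_⟩
    · -- covering
      intro z _
      have hw : κ z ∈ Fintype.piFinset (fun _ : Fin m => F) :=
        Fintype.mem_piFinset.mpr fun i => hnearF _
      have hex : ∃ y, κ y = κ z := ⟨z, rfl⟩
      have hrepz : κ (rep (κ z)) = κ z := by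
        rw [hrepdef]
        simp only [dif_pos hex]
        exact hex.choose_spec
      have hmemL : rep (κ z) ∈ L := by
        rw [hLdef]
        exact List.mem_map_of_mem (f := rep) (Finset.mem_toList.mpr hw)
      obtain ⟨⟨i, hi⟩, hget⟩ := List.mem_iff_get.mp hmemL
      refine mem_iUnion.mpr ⟨i, ?_⟩
      have hci : c i = (m, L.get ⟨i, hi⟩) := by rw [hcdef]; simp [hi]
      rw [hci]
      show ∀ j < m, dist (T^[j] (L.get ⟨i, hi⟩)) (T^[j] z) < ε
      intro j hj
      rw [hget]
      have e1 : near (T^[j] (rep (κ z))) = near (T^[j] z) := congrFun hrepz ⟨j, hj⟩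
      have d1 : dist (T^[j] (rep (κ z))) (near (T^[j] (rep (κ z)))) < ε/2 := hnear _
      have d2 : dist (T^[j] z) (near (T^[j] z)) < ε/2 := hnear _
      calc dist (T^[j] (rep (κ z))) (T^[j] z)
          ≤ dist (T^[j] (rep (κ z))) (near (T^[j] z)) + dist (near (T^[j] z)) (T^[j] z) :=
            dist_triangle _ _ _
        _ < ε/2 + ε/2 := add_lt_add (by rw [← e1]; exact d1) (by rw [dist_comm]; exact d2)
        _ = ε := by ring
    · -- sum bound
      rw [← Summable.sum_add_tsum_nat_add' (f := fun i => ENNReal.ofReal (Real.exp (-t * (c i).1 +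
        sSup ((birkhoff T φ (c i).1) '' bowenBall T (c i).1 (c i).2 ε)))) (k := L.length)
        ENNReal.summable]
      have hA' : ∑ i ∈ Finset.range L.length, ENNReal.ofReal (Real.exp (-t * (c i).1 +
          sSup ((birkhoff T φ (c i).1) '' bowenBall T (c i).1 (c i).2 ε)))
          ≤ ENNReal.ofReal (r ^ m) * 1 := by
        calc ∑ i ∈ Finset.range L.length, ENNReal.ofReal (Real.exp (-t * (c i).1 +
              sSup ((birkhoff T φ (c i).1) '' bowenBall T (c i).1 (c i).2 ε)))
            ≤ ∑ _i ∈ Finset.range L.length, ENNReal.ofReal (q ^ m) := by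
              refine Finset.sum_le_sum fun i hi => ?_
              have hilt : i < L.length := Finset.mem_range.mp hi
              have hci : c i = (m, L.get ⟨i, hilt⟩) := by rw [hcdef]; simp [hilt]
              rw [hci]
              exact hterm_le m _
          _ = (L.length : ℝ≥0∞) * ENNReal.ofReal (q ^ m) := by
              rw [Finset.sum_const, Finset.card_range, nsmul_eq_mul]
          _ = ENNReal.ofReal ((L.length : ℝ) * q ^ m) := by
              rw [ENNReal.ofReal_mul (by positivity), ENNReal.ofReal_natCast]
          _ ≤ ENNReal.ofReal (A ^ m * q ^ m) := by
              apply ENNReal.ofReal_le_ofReal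
              have hcast : (L.length : ℝ) = A ^ m := by
                rw [hLlen, hAdef]; push_cast; ring
              rw [hcast]
          _ = ENNReal.ofReal (r ^ m) := by rw [← mul_pow, hAq]
          _ = ENNReal.ofReal (r ^ m) * 1 := (mul_one _).symm
      have hB' : (∑' i, ENNReal.ofReal (Real.exp (-t * (c (i + L.length)).1 +
          sSup ((birkhoff T φ (c (i + L.length)).1) ''
            bowenBall T (c (i + L.length)).1 (c (i + L.length)).2 ε))))
          ≤ ENNReal.ofReal (r ^ m) * (1 - ENNReal.ofReal r)⁻¹ := by
        have hstep : ∀ i : ℕ, ENNReal.ofReal (Real.exp (-t * (c (i + L.length)).1 +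
            sSup ((birkhoff T φ (c (i + L.length)).1) ''
              bowenBall T (c (i + L.length)).1 (c (i + L.length)).2 ε)))
            ≤ ENNReal.ofReal (r ^ m) * (ENNReal.ofReal r) ^ i := by
          intro i
          have hnlt : ¬ (i + L.length < L.length) := by omega
          have hci : c (i + L.length) = (m + 1 + (i + L.length), Classical.arbitrary X) := by
            rw [hcdef]; simp [hnlt]
          rw [hci]
          refine le_trans (hterm_le _ _) ?_
          have h1 : q ^ (m + 1 + (i + L.length)) ≤ q ^ (m + i) :=
            pow_le_pow_of_le_one hq0 hq1 (by omega)
          have h2 : q ^ (m + i) ≤ r ^ (m + i) := pow_le_pow_left₀ hq0 hqr _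
          calc ENNReal.ofReal (q ^ (m + 1 + (i + L.length)))
              ≤ ENNReal.ofReal (r ^ (m + i)) := ENNReal.ofReal_le_ofReal (h1.trans h2)
            _ = ENNReal.ofReal (r ^ m) * (ENNReal.ofReal r) ^ i := by
                rw [pow_add, ENNReal.ofReal_mul (by positivity), ENNReal.ofReal_pow hr0,
                  ENNReal.ofReal_pow hr0]
        calc (∑' i, ENNReal.ofReal (Real.exp (-t * (c (i + L.length)).1 +
            sSup ((birkhoff T φ (c (i + L.length)).1) ''
              bowenBall T (c (i + L.length)).1 (c (i + L.length)).2 ε))))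
            ≤ ∑' i, ENNReal.ofReal (r ^ m) * (ENNReal.ofReal r) ^ i :=
              ENNReal.tsum_le_tsum hstep
          _ = ENNReal.ofReal (r ^ m) * ∑' i, (ENNReal.ofReal r) ^ i := ENNReal.tsum_mul_left
          _ = ENNReal.ofReal (r ^ m) * (1 - ENNReal.ofReal r)⁻¹ := by
              rw [ENNReal.tsum_geometric]
      calc _ ≤ ENNReal.ofReal (r ^ m) * 1 + ENNReal.ofReal (r ^ m) * (1 - ENNReal.ofReal r)⁻¹ :=
            add_le_add hA' hB'
        _ = ENNReal.ofReal (r ^ m) * C := by rw [hCdef, mul_add]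
  -- conclude
  refine ⟨t, ?_⟩
  refine le_antisymm (iSup_le fun n => ?_) zero_le
  have hle : ∀ m, n ≤ m → ppM T φ Z t n ε ≤ ENNReal.ofReal (r ^ m) * C := by
    intro m hm
    obtain ⟨c, hc1, hc2, hc3⟩ := key m
    refine le_trans ?_ hc3
    exact iInf_le_of_le c (iInf_le_of_le (fun i => le_trans hm (hc1 i))
      (iInf_le_of_le (fun z _ => hc2 (mem_univ z)) le_rfl))
  have htend : Tendsto (fun m : ℕ => ENNReal.ofReal (r ^ m) * C) atTop (𝓝 0) := by
    have h1 : Tendsto (fun m : ℕ => ENNReal.ofReal (r ^ m)) atTop (𝓝 0) := by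
      have h0 := tendsto_pow_atTop_nhds_zero_of_lt_one hr0 hr1
      have h2 := (ENNReal.continuous_ofReal.tendsto 0).comp h0
      simpa [Function.comp_def] using h2
    simpa using ENNReal.Tendsto.mul_const h1 (Or.inr hC)
  exact ge_of_tendsto htend (eventually_atTop.mpr ⟨n, fun m hm => hle m hm⟩)



lemma bowen_mem (T : X → X) (n : ℕ) (x : X) {ε : ℝ} (hε : 0 < ε) :
    x ∈ bowenBall T n x ε := fun i _ => by simp [hε]

lemma bowen_open {T : X → X} (hT : Continuous T) (n : ℕ) (x : X) (ε : ℝ) :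
    IsOpen (bowenBall T n x ε) := by
  have : bowenBall T n x ε = ⋂ i ∈ Finset.range n, {y | dist (T^[i] x) (T^[i] y) < ε} := by
    ext y; simp [bowenBall]
  rw [this]
  exact isOpen_biInter_finset fun i _ =>
    isOpen_lt (Continuous.dist continuous_const (hT.iterate i)) continuous_const

lemma le_sSup_birkhoff {T : X → X} {φ : X → ℝ} {M : ℝ} (hM : ∀ y, φ y ≤ M)
    (n : ℕ) (x : X) {ε : ℝ} (hε : 0 < ε) :
    birkhoff T φ n x ≤ sSup (birkhoff T φ n '' bowenBall T n x ε) :=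
  le_csSup ⟨n * M, fun r hr => by obtain ⟨y, -, rfl⟩ := hr; exact birkhoff_le hM n y⟩
    (mem_image_of_mem _ (bowen_mem T n x hε))

end helpers

/-- Generalised pressure distribution principle. -/
theorem stmt4 {X : Type*} [MetricSpace X] [CompactSpace X]
    [MeasurableSpace X] [BorelSpace X]
    (T : X → X) (hT : Continuous T) (φ : X → ℝ) (hφ : Continuous φ)
    (Z : Set X) (hZBorel : MeasurableSet Z)
    (ε s : ℝ) (hε : 0 < ε) (hs : 0 ≤ s)
    (μ : ℕ → Measure X) (hμ : ∀ k, IsProbabilityMeasure (μ k))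
    (K : ℝ) (hK : 0 < K) (N : ℕ)
    (hbound : ∀ (x : X) (n : ℕ), N ≤ n → (bowenBall T n x ε ∩ Z).Nonempty →
      Filter.atTop.limsup (fun k => ((μ k) (bowenBall T n x ε)).toReal) ≤
        K * Real.exp (-(n : ℝ) * s + birkhoff T φ n x))
    (ν : Measure X) (hν : IsProbabilityMeasure ν)
    (σ : ℕ → ℕ) (hσ : StrictMono σ)
    (hweak : ∀ f : C(X, ℝ), Filter.Tendsto (fun k => ∫ x, f x ∂(μ (σ k)))
      Filter.atTop (𝓝 (∫ x, f x ∂ν)))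
    (hνZ : 0 < ν Z) :
    s ≤ ppPressureAt T φ Z ε := by
  classical
  have hXne : Nonempty X := by
    by_contra h
    rw [not_nonempty_iff] at h
    have hZe : Z = ∅ := Set.eq_empty_of_isEmpty Z
    rw [hZe] at hνZ
    simp at hνZ
  obtain ⟨t₀, ht₀⟩ := ppMlim_zero_exists T φ hφ Z hε
  refine le_csInf ⟨t₀, ht₀⟩ fun t ht => ?_
  simp only [mem_setOf_eq] at ht
  by_contra hlt
  push_neg at hlt
  -- bound on φ
  obtain ⟨x₀, -, hx₀⟩ := isCompact_univ.exists_isMaxOn univ_nonempty hφ.continuousOn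
  set M : ℝ := max (φ x₀) 0 with hMdef
  have hM : ∀ y, φ y ≤ M := fun y => le_max_of_le_left (hx₀ (mem_univ y))
  -- weak* limits as probability measures
  let P : ProbabilityMeasure X := ⟨ν, hν⟩
  let Ps : ℕ → ProbabilityMeasure X := fun k => ⟨μ (σ k), hμ _⟩
  have hPs : Tendsto Ps atTop (𝓝 P) := by
    rw [ProbabilityMeasure.tendsto_iff_forall_integral_tendsto]
    intro f
    exact hweak f.toContinuousMap
  have hopen : ∀ B : Set X, IsOpen B → ν B ≤ atTop.limsup (fun k => μ k B) := by
    intro B hB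
    have h1 : (P : Measure X) B ≤ atTop.liminf (fun k => (Ps k : Measure X) B) :=
      ProbabilityMeasure.le_liminf_measure_open_of_tendsto hPs hB
    have h2 : atTop.liminf (fun k => (Ps k : Measure X) B) ≤
        atTop.limsup (fun k => (Ps k : Measure X) B) := liminf_le_limsup
    have h3 : atTop.limsup (fun k => (μ (σ k)) B) ≤ atTop.limsup (fun k => μ k B) := by
      rw [show (fun k => (μ (σ k)) B) = (fun k => μ k B) ∘ σ from rfl, limsup_comp]
      exact limsup_le_limsup_of_le hσ.tendsto_atTop
    exact le_trans h1 (le_trans h2 h3)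
  -- the per-ball bound
  have hball : ∀ (x : X) (m : ℕ), N ≤ m → (bowenBall T m x ε ∩ Z).Nonempty →
      ν (bowenBall T m x ε) ≤ ENNReal.ofReal K * ENNReal.ofReal (Real.exp (-t * m +
        sSup ((birkhoff T φ m) '' bowenBall T m x ε))) := by
    intro x m hm hne
    set B := bowenBall T m x ε with hBdef
    set R : ℝ := K * Real.exp (-(m:ℝ) * s + birkhoff T φ m x) with hRdef
    have hR0 : 0 ≤ R := by positivity
    have hlimsup_le : atTop.limsup (fun k => μ k B) ≤ ENNReal.ofReal R := by
      refine ENNReal.le_of_forall_pos_le_add fun δ hδ _ => ?_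
      have hbdd : IsBoundedUnder (· ≤ ·) atTop (fun k => ((μ k) B).toReal) :=
        isBoundedUnder_of ⟨1, fun k => by
          have h1 : μ k B ≤ 1 := prob_le_one
          calc ((μ k) B).toReal ≤ (1 : ℝ≥0∞).toReal :=
                ENNReal.toReal_mono ENNReal.one_ne_top h1
            _ = 1 := by simp⟩
      have hlt2 : atTop.limsup (fun k => ((μ k) B).toReal) < R + δ :=
        lt_of_le_of_lt (hbound x m hm hne) (by
          rw [hRdef]
          have : (0:ℝ) < δ := hδ
          linarith)
      have hev : ∀ᶠ k in atTop, ((μ k) B).toReal < R + δ :=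
        eventually_lt_of_limsup_lt hlt2 hbdd
      have hev2 : ∀ᶠ k in atTop, (μ k) B ≤ ENNReal.ofReal (R + δ) := by
        refine hev.mono fun k hk => ?_
        have h4 : (μ k) B = ENNReal.ofReal (((μ k) B).toReal) :=
          (ENNReal.ofReal_toReal (measure_ne_top _ _)).symm
        rw [h4]
        exact ENNReal.ofReal_le_ofReal hk.le
      refine le_trans (limsup_le_of_le (by isBoundedDefault) hev2) ?_
      rw [ENNReal.ofReal_add hR0 δ.coe_nonneg]
      simp
    have hcomp : ENNReal.ofReal R ≤ ENNReal.ofReal K * ENNReal.ofReal (Real.exp (-t * m +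
        sSup ((birkhoff T φ m) '' B))) := by
      rw [← ENNReal.ofReal_mul hK.le]
      apply ENNReal.ofReal_le_ofReal
      rw [hRdef]
      apply mul_le_mul_of_nonneg_left _ hK.le
      apply Real.exp_le_exp.mpr
      have h1 : birkhoff T φ m x ≤ sSup ((birkhoff T φ m) '' B) :=
        le_sSup_birkhoff (M := M) hM m x hε
      have h2 : (0:ℝ) ≤ (m : ℝ) * (s - t) :=
        mul_nonneg (Nat.cast_nonneg m) (by linarith)
      nlinarith [h1, h2]
    exact le_trans (hopen B (bowen_open hT m x ε)) (le_trans hlimsup_le hcomp)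
  -- extract a good cover
  have h0 : ppM T φ Z t N ε = 0 :=
    le_antisymm (le_trans (le_iSup (fun n => ppM T φ Z t n ε) N) ht.le) zero_le
  have hKne0 : ENNReal.ofReal K ≠ 0 := by
    simp only [ne_eq, ENNReal.ofReal_eq_zero, not_le]
    exact hK
  set δ : ℝ≥0∞ := ν Z / (2 * ENNReal.ofReal K) with hδdef
  have hδpos : 0 < δ := ENNReal.div_pos hνZ.ne' (by
    exact ENNReal.mul_ne_top (by simp) ENNReal.ofReal_ne_top)
  have hlt0 : ppM T φ Z t N ε < δ := by rw [h0]; exact hδpos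
  simp only [ppM, iInf_lt_iff] at hlt0
  obtain ⟨c, hc1, hc2, hcs⟩ := hlt0
  have hνle : ν Z ≤ ENNReal.ofReal K * ∑' i, ENNReal.ofReal (Real.exp (-t * (c i).1 +
      sSup ((birkhoff T φ (c i).1) '' bowenBall T (c i).1 (c i).2 ε))) := by
    have hcover : Z ⊆ ⋃ i, (Z ∩ bowenBall T (c i).1 (c i).2 ε) := by
      intro z hz
      obtain ⟨i, hi⟩ := mem_iUnion.mp (hc2 hz)
      exact mem_iUnion.mpr ⟨i, hz, hi⟩
    calc ν Z ≤ ν (⋃ i, (Z ∩ bowenBall T (c i).1 (c i).2 ε)) := measure_mono hcover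
      _ ≤ ∑' i, ν (Z ∩ bowenBall T (c i).1 (c i).2 ε) := measure_iUnion_le _
      _ ≤ ∑' i, ENNReal.ofReal K * ENNReal.ofReal (Real.exp (-t * (c i).1 +
          sSup ((birkhoff T φ (c i).1) '' bowenBall T (c i).1 (c i).2 ε))) := by
          refine ENNReal.tsum_le_tsum fun i => ?_
          by_cases hne : (bowenBall T (c i).1 (c i).2 ε ∩ Z).Nonempty
          · exact le_trans (measure_mono inter_subset_right) (hball _ _ (hc1 i) hne)
          · have he : Z ∩ bowenBall T (c i).1 (c i).2 ε = ∅ := by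
              rw [Set.not_nonempty_iff_eq_empty] at hne
              rw [inter_comm]
              exact hne
            simp [he]
      _ = ENNReal.ofReal K * ∑' i, ENNReal.ofReal (Real.exp (-t * (c i).1 +
          sSup ((birkhoff T φ (c i).1) '' bowenBall T (c i).1 (c i).2 ε))) :=
          ENNReal.tsum_mul_left
  have hfin : ν Z ≤ ν Z / 2 := by
    refine le_trans (le_trans hνle (mul_le_mul' le_rfl hcs.le)) (le_of_eq ?_)
    rw [hδdef, ← mul_div_assoc, mul_comm (2:ℝ≥0∞) (ENNReal.ofReal K),
      ENNReal.mul_div_mul_left _ _ hKne0 ENNReal.ofReal_ne_top]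
  exact absurd hfin (ENNReal.half_lt_self hνZ.ne' (measure_ne_top ν Z)).not_ge
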